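/- Let π be a uniform random permutation of [n] and A,B ⊆ [n] with e_π(A,B) = |{x ∈ A : π(x) ∈ B}|. Then the exponential moment satisfies E[exp(λ e_π(A,B))] ≤ exp(|A||B| e^{1+λ} / n) for every λ > 0. -/

import Mathlib

open Finset

lemma card_perm_mapsTo (n : ℕ) (S B : Finset (Fin n)) :
    (univ.filter fun π : Equiv.Perm (Fin n) => ∀ x ∈ S, π x ∈ B).card
      ≤ B.card.descFactorial S.card * (n - S.card).factorial := by
  classical
  rw [← Fintype.card_subtype]
  have key : Fintype.card {π : Equiv.Perm (Fin n) // ∀ x ∈ S, π x ∈ B}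
      ≤ Fintype.card (Σ g : (↥S ↪ ↥B),
          (↥(Sᶜ) ↪ ↥((Finset.univ.image fun x : ↥S => ((g x : ↥B) : Fin n))ᶜ))) := by
    apply Fintype.card_le_of_injective
      (fun p => ⟨⟨fun x => ⟨p.1 x, p.2 x x.2⟩,
        fun x y hxy => Subtype.ext (p.1.injective (congrArg Subtype.val hxy))⟩,
        ⟨fun y => ⟨p.1 y, by
          simp only [Finset.mem_compl, Finset.mem_image, Finset.mem_univ, true_and, not_exists]
          intro x hx
          exact absurd (show (y : Fin n) ∈ S from (p.1.injective (show p.1 (x : Fin n) = p.1 (y : Fin n) from hx)) ▸ x.2)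
            (Finset.mem_compl.mp y.2)⟩,
        fun x y hxy => Subtype.ext (p.1.injective (congrArg Subtype.val hxy))⟩⟩)
    intro p q h
    have h' := congrArg (fun z : (Σ g : (↥S ↪ ↥B),
          (↥(Sᶜ) ↪ ↥((Finset.univ.image fun x : ↥S => ((g x : ↥B) : Fin n))ᶜ))) =>
        ((fun x : ↥S => ((z.1 x : ↥B) : Fin n)), (fun y : ↥(Sᶜ) => ((z.2 y : Fin n))))) h
    simp only [Prod.mk.injEq] at h'
    refine Subtype.ext (Equiv.ext fun x => ?_)
    by_cases hx : x ∈ S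
    · exact congrFun h'.1 ⟨x, hx⟩
    · exact congrFun h'.2 ⟨x, Finset.mem_compl.mpr hx⟩
  refine key.trans ?_
  rw [Fintype.card_sigma]
  have hfib : ∀ g : (↥S ↪ ↥B),
      Fintype.card (↥(Sᶜ) ↪ ↥((Finset.univ.image fun x : ↥S => ((g x : ↥B) : Fin n))ᶜ))
        = (n - S.card).factorial := by
    intro g
    have himg : (Finset.univ.image fun x : ↥S => ((g x : ↥B) : Fin n)).card = S.card := by
      rw [Finset.card_image_of_injective _
        (fun x y hxy => g.injective (Subtype.ext hxy))]
      simp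
    rw [Fintype.card_embedding_eq]
    simp only [Fintype.card_coe, Finset.card_compl, himg, Fintype.card_fin]
    exact Nat.descFactorial_self _
  rw [Finset.sum_congr rfl (fun g _ => hfib g), Finset.sum_const, smul_eq_mul]
  rw [Finset.card_univ, Fintype.card_embedding_eq, Fintype.card_coe, Fintype.card_coe]

lemma desc_step (n a b k : ℕ) (ha : a ≤ n) (hb : b ≤ n) :
    (a - k) * (b - k) * n ≤ a * b * (n - k) := by
  by_cases hka : k ≤ a
  · by_cases hkb : k ≤ b
    · have hkn : k ≤ n := hka.trans ha
      zify [hka, hkb, hkn]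
      have ha' : (a:ℤ) ≤ n := by exact_mod_cast ha
      have hb' : (b:ℤ) ≤ n := by exact_mod_cast hb
      have hka' : (k:ℤ) ≤ a := by exact_mod_cast hka
      have hkb' : (k:ℤ) ≤ b := by exact_mod_cast hkb
      have hk0 : (0:ℤ) ≤ k := Int.natCast_nonneg k
      nlinarith [mul_nonneg (mul_nonneg hk0 (hk0.trans hka')) (sub_nonneg.mpr hb'),
        mul_nonneg (mul_nonneg hk0 (hk0.trans (hka'.trans ha'))) (sub_nonneg.mpr hkb')]
    · simp [Nat.sub_eq_zero_of_le (le_of_not_ge hkb)]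
  · simp [Nat.sub_eq_zero_of_le (le_of_not_ge hka)]

lemma desc_key (n a b : ℕ) (ha : a ≤ n) (hb : b ≤ n) (k : ℕ) :
    a.descFactorial k * b.descFactorial k * n ^ k
      ≤ a ^ k * b ^ k * n.descFactorial k := by
  induction k with
  | zero => simp
  | succ k ih =>
    have step := desc_step n a b k ha hb
    calc a.descFactorial (k+1) * b.descFactorial (k+1) * n ^ (k+1)
        = ((a - k) * (b - k) * n) * (a.descFactorial k * b.descFactorial k * n ^ k) := by
          rw [Nat.descFactorial_succ, Nat.descFactorial_succ, pow_succ]; ring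
      _ ≤ (a * b * (n - k)) * (a ^ k * b ^ k * n.descFactorial k) :=
          Nat.mul_le_mul step ih
      _ = a ^ (k+1) * b ^ (k+1) * n.descFactorial (k+1) := by
          rw [Nat.descFactorial_succ, pow_succ, pow_succ]; ring


lemma powersetCard_filter_eq (n j : ℕ) (A : Finset (Fin n)) (P : Fin n → Prop)
    [DecidablePred P] :
    powersetCard j (A.filter P) = (powersetCard j A).filter (fun S => ∀ x ∈ S, P x) := by
  ext S
  simp only [mem_powersetCard, mem_filter, Finset.subset_iff]
  constructor
  · rintro ⟨hsub, hcard⟩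
    exact ⟨⟨fun x hx => (hsub hx).1, hcard⟩, fun x hx => (hsub hx).2⟩
  · rintro ⟨⟨hsub, hcard⟩, hP⟩
    exact ⟨fun x hx => ⟨hsub hx, hP x hx⟩, hcard⟩

lemma sum_choose_le (n j : ℕ) (A B : Finset (Fin n)) :
    (∑ π : Equiv.Perm (Fin n), ((A.filter fun x => π x ∈ B).card.choose j))
      ≤ A.card.choose j * (B.card.descFactorial j * (n - j).factorial) := by
  classical
  have h1 : ∀ π : Equiv.Perm (Fin n),
      (A.filter fun x => π x ∈ B).card.choose j
        = ∑ S ∈ powersetCard j A, if ∀ x ∈ S, π x ∈ B then 1 else 0 := by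
    intro π
    rw [← Finset.card_powersetCard, powersetCard_filter_eq, Finset.card_filter]
  calc ∑ π : Equiv.Perm (Fin n), ((A.filter fun x => π x ∈ B).card.choose j)
      = ∑ S ∈ powersetCard j A, ∑ π : Equiv.Perm (Fin n),
          if ∀ x ∈ S, π x ∈ B then 1 else 0 := by
        rw [Finset.sum_congr rfl fun π _ => h1 π]; exact Finset.sum_comm
    _ ≤ ∑ _S ∈ powersetCard j A, B.card.descFactorial j * (n - j).factorial := by
        apply Finset.sum_le_sum
        intro S hS
        have hScard : S.card = j := (mem_powersetCard.mp hS).2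
        rw [← Finset.card_filter]
        simpa [hScard] using card_perm_mapsTo n S B
    _ = A.card.choose j * (B.card.descFactorial j * (n - j).factorial) := by
        rw [Finset.sum_const, smul_eq_mul, Finset.card_powersetCard]


/-- Let `π` be a uniformly random permutation of `[n]` and
`A, B ⊆ [n]`, with `e_π(A,B) = |{x ∈ A : π x ∈ B}|`. Then for every `λ > 0`,
`E[exp(λ e_π(A,B))] ≤ exp(|A||B| e^{1+λ}/n)` (the expectation being the average
over all `n!` permutations). -/
theorem perm_exp_moment (n : ℕ) (hn : 1 ≤ n) (A B : Finset (Fin n)) (lam : ℝ)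
    (hlam : 0 < lam) :
    (∑ π : Equiv.Perm (Fin n),
        Real.exp (lam * (A.filter fun x => π x ∈ B).card)) / (Nat.factorial n : ℝ)
      ≤ Real.exp ((A.card : ℝ) * B.card * Real.exp (1 + lam) / n) := by
  classical
  set t : ℝ := Real.exp lam - 1 with ht_def
  have ht : 0 ≤ t := by
    have := Real.one_le_exp hlam.le
    simp [ht_def]; linarith
  have hn0 : (0:ℝ) < n := by positivity
  have ha : A.card ≤ n := by simpa using A.card_le_univ
  have hb : B.card ≤ n := by simpa using B.card_le_univ
  have hXle : ∀ π : Equiv.Perm (Fin n), (A.filter fun x => π x ∈ B).card ≤ n :=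
    fun π => (Finset.card_filter_le _ _).trans ha
  -- Step 1: pointwise expansion
  have step1 : ∀ π : Equiv.Perm (Fin n),
      Real.exp (lam * (A.filter fun x => π x ∈ B).card)
        = ∑ j ∈ range (n+1),
            t ^ j * ((A.filter fun x => π x ∈ B).card.choose j : ℝ) := by
    intro π
    set X := (A.filter fun x => π x ∈ B).card with hX
    have h1 : Real.exp (lam * X) = (t + 1) ^ X := by
      rw [mul_comm, Real.exp_nat_mul]
      congr 1
      simp [ht_def]
    rw [h1, add_pow]
    simp only [one_pow, mul_one]
    apply Finset.sum_subset
    · exact Finset.range_subset_range.mpr (Nat.succ_le_succ (hXle π))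
    · intro j _ hj
      rw [Finset.mem_range, not_lt] at hj
      rw [Nat.choose_eq_zero_of_lt hj]
      simp
  -- per-j real bound
  have perj : ∀ j ∈ range (n+1),
      t ^ j * ((∑ π : Equiv.Perm (Fin n),
          ((A.filter fun x => π x ∈ B).card.choose j)) : ℝ) / (Nat.factorial n : ℝ)
        ≤ (t * ((A.card : ℝ) * B.card / n)) ^ j / (Nat.factorial j : ℝ) := by
    intro j hj
    have hjn : j ≤ n := Nat.lt_succ_iff.mp (Finset.mem_range.mp hj)
    have natlem : (A.card.choose j * (B.card.descFactorial j * (n - j).factorial))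
        * Nat.factorial j * n ^ j ≤ (A.card * B.card) ^ j * Nat.factorial n := by
      rw [← Nat.factorial_mul_descFactorial hjn, mul_pow]
      calc (A.card.choose j * (B.card.descFactorial j * (n - j).factorial))
            * Nat.factorial j * n ^ j
          = (A.card.descFactorial j * B.card.descFactorial j * n ^ j)
              * (n - j).factorial := by
            rw [Nat.descFactorial_eq_factorial_mul_choose A.card j]; ring
        _ ≤ (A.card ^ j * B.card ^ j * n.descFactorial j) * (n - j).factorial :=
            Nat.mul_le_mul_right _ (desc_key n A.card B.card ha hb j)
        _ = A.card ^ j * B.card ^ j * ((n - j).factorial * n.descFactorial j) := by ring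
    have core : ((A.card.choose j * (B.card.descFactorial j * (n - j).factorial) : ℕ) : ℝ)
        / (Nat.factorial n : ℝ)
        ≤ ((A.card : ℝ) * B.card / n) ^ j / (Nat.factorial j : ℝ) := by
      rw [div_le_div_iff₀ (by positivity) (by positivity), div_pow,
        div_mul_eq_mul_div, le_div_iff₀ (by positivity)]
      calc ((A.card.choose j * (B.card.descFactorial j * (n - j).factorial) : ℕ) : ℝ)
            * (Nat.factorial j : ℝ) * (n:ℝ) ^ j
          = (((A.card.choose j * (B.card.descFactorial j * (n - j).factorial))
              * Nat.factorial j * n ^ j : ℕ) : ℝ) := by push_cast; ring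
        _ ≤ (((A.card * B.card) ^ j * Nat.factorial n : ℕ) : ℝ) := by
            exact_mod_cast natlem
        _ = ((A.card:ℝ) * B.card) ^ j * (Nat.factorial n : ℝ) := by push_cast; ring
    calc t ^ j * ((∑ π : Equiv.Perm (Fin n),
            ((A.filter fun x => π x ∈ B).card.choose j)) : ℝ) / (Nat.factorial n : ℝ)
        ≤ t ^ j * ((A.card.choose j * (B.card.descFactorial j * (n - j).factorial) : ℕ) : ℝ)
            / (Nat.factorial n : ℝ) := by
          gcongr
          exact_mod_cast sum_choose_le n j A B
      _ = t ^ j * (((A.card.choose j * (B.card.descFactorial j * (n - j).factorial) : ℕ) : ℝ)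
            / (Nat.factorial n : ℝ)) := by ring
      _ ≤ t ^ j * (((A.card : ℝ) * B.card / n) ^ j / (Nat.factorial j : ℝ)) :=
          mul_le_mul_of_nonneg_left core (by positivity)
      _ = (t * ((A.card : ℝ) * B.card / n)) ^ j / (Nat.factorial j : ℝ) := by
          rw [mul_pow]; ring
  -- assemble
  calc (∑ π : Equiv.Perm (Fin n),
        Real.exp (lam * (A.filter fun x => π x ∈ B).card)) / (Nat.factorial n : ℝ)
      = (∑ j ∈ range (n+1), t ^ j * ((∑ π : Equiv.Perm (Fin n),
          ((A.filter fun x => π x ∈ B).card.choose j)) : ℝ)) / (Nat.factorial n : ℝ) := by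
        rw [Finset.sum_congr rfl fun π _ => step1 π, Finset.sum_comm]
        congr 1
        refine Finset.sum_congr rfl fun j _ => ?_
        rw [← Finset.mul_sum]
    _ = ∑ j ∈ range (n+1), t ^ j * ((∑ π : Equiv.Perm (Fin n),
          ((A.filter fun x => π x ∈ B).card.choose j)) : ℝ) / (Nat.factorial n : ℝ) := by
        rw [Finset.sum_div]
    _ ≤ ∑ j ∈ range (n+1), (t * ((A.card : ℝ) * B.card / n)) ^ j / (Nat.factorial j : ℝ) :=
        Finset.sum_le_sum perj
    _ ≤ Real.exp (t * ((A.card : ℝ) * B.card / n)) :=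
        Real.sum_le_exp_of_nonneg (by positivity) (n+1)
    _ ≤ Real.exp ((A.card : ℝ) * B.card * Real.exp (1 + lam) / n) := by
        apply Real.exp_le_exp.mpr
        have h1 : t ≤ Real.exp (1 + lam) := by
          have := Real.exp_le_exp.mpr (show lam ≤ 1 + lam by linarith)
          simp [ht_def]; linarith
        have h2 : (0:ℝ) ≤ (A.card : ℝ) * B.card / n := by positivity
        calc t * ((A.card : ℝ) * B.card / n)
            ≤ Real.exp (1 + lam) * ((A.card : ℝ) * B.card / n) :=
              mul_le_mul_of_nonneg_right h1 h2
          _ = (A.card : ℝ) * B.card * Real.exp (1 + lam) / n := by ring
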